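/- Let G and H be metrizable topological groups, U ⊆ G and V ⊆ H open subsets, and E a locally convex space. Then the map f ↦ f^∨, where f^∨(x) := f(x,·), is a bijection from the set of C^{1,0}-maps U × V → E onto the set of C¹-maps U → C(V,E) (with C(V,E) carrying the compact-open topology); in particular, for every C¹-map g : U → C(V,E), the map g^∧ : U × V → E, (x,y) ↦ g(x)(y), is C^{1,0}. -/

import Mathlib

open Filter Topology Set

/-- The set of continuous one-parameter subgroups `γ : (ℝ,+) → G`, as a subtype of `C(ℝ, G)`
(hence endowed with the compact-open topology). -/
abbrev OneParam (G : Type*) [TopologicalSpace G] [Group G] : Type _ :=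
  {γ : C(ℝ, G) // ∀ s t : ℝ, γ (s + t) = γ s * γ t}

/-- `D_γ f(x) = v`, i.e. `(1/t)(f(x·γ(t)) − f(x)) → v` as `t → 0` (for maps into any
Hausdorff topological `ℝ`-vector space, such as `C(V,E)` with the compact-open topology). -/
def HasDirDeriv {G E : Type*} [TopologicalSpace G] [Group G]
    [AddCommGroup E] [Module ℝ E] [TopologicalSpace E]
    (f : G → E) (x : G) (γ : OneParam G) (v : E) : Prop :=
  Tendsto (fun t : ℝ => t⁻¹ • (f (x * γ.1 t) - f x)) (𝓝[≠] (0 : ℝ)) (𝓝 v)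

/-- `g` is a `C¹`-map on `U` (into a topological vector space). -/
def IsC1 {G F : Type*} [TopologicalSpace G] [Group G]
    [AddCommGroup F] [Module ℝ F] [TopologicalSpace F]
    (g : G → F) (U : Set G) : Prop :=
  ContinuousOn g U ∧
  ∃ dg : G → OneParam G → F,
    (∀ x ∈ U, ∀ γ : OneParam G, HasDirDeriv g x γ (dg x γ)) ∧
    ContinuousOn (fun p : G × OneParam G => dg p.1 p.2) (U ×ˢ (univ : Set (OneParam G)))

/-- `f` is a `C^{1,0}`-map on `U × V`. -/
def IsC10 {G H E : Type*} [TopologicalSpace G] [Group G] [TopologicalSpace H]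
    [AddCommGroup E] [Module ℝ E] [TopologicalSpace E]
    (f : G → H → E) (U : Set G) (V : Set H) : Prop :=
  ContinuousOn (fun p : G × H => f p.1 p.2) (U ×ˢ V) ∧
  ∃ d10 : G → H → OneParam G → E,
    (∀ x ∈ U, ∀ y ∈ V, ∀ γ : OneParam G,
      HasDirDeriv (fun x' => f x' y) x γ (d10 x y γ)) ∧
    ContinuousOn (fun p : G × H × OneParam G => d10 p.1 p.2.1 p.2.2)
      (U ×ˢ V ×ˢ (univ : Set (OneParam G)))

open scoped Classical in
/-- The map `F ↦ F^∨` on functions `U × V → E`, with values in functions `U → C(V,E)`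
(defined to be `0` where the slice is not continuous). -/
noncomputable def Phi {G H E : Type*} [TopologicalSpace G] [TopologicalSpace H]
    [AddCommGroup E] [TopologicalSpace E] [IsTopologicalAddGroup E]
    {U : Set G} {V : Set H} (F : ↥U × ↥V → E) : ↥U → C(↥V, E) := fun u =>
  if h : Continuous fun v : ↥V => F (u, v) then ⟨fun v => F (u, v), h⟩ else 0

/-! ### Auxiliary lemmas -/


theorem OneParam.map_zero' {G : Type*} [TopologicalSpace G] [Group G] (γ : OneParam G) :
    γ.1 0 = 1 := by
  have := γ.2 0 0
  rw [add_zero] at this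
  exact left_eq_mul.mp this

instance OneParam.firstCountableTopology {G : Type*} [TopologicalSpace G] [Group G]
    [TopologicalSpace.MetrizableSpace G] :
    FirstCountableTopology (OneParam G) :=
  TopologicalSpace.firstCountableTopology_induced _ _ ((↑) : OneParam G → C(ℝ, G))

/-- In a locally convex space, closed convex sets form a neighbourhood basis. -/
theorem exists_closed_convex_nhds {E : Type*} [AddCommGroup E] [Module ℝ E] [TopologicalSpace E]
    [IsTopologicalAddGroup E] [ContinuousSMul ℝ E] [LocallyConvexSpace ℝ E]
    {p : E} {W : Set E} (hW : W ∈ 𝓝 p) :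
    ∃ S ∈ 𝓝 p, Convex ℝ S ∧ IsClosed S ∧ S ⊆ W := by
  obtain ⟨C, hC, hCcl, hCW⟩ := exists_mem_nhds_isClosed_subset hW
  obtain ⟨D, ⟨hD, hDconv⟩, hDC⟩ := (LocallyConvexSpace.convex_basis (𝕜 := ℝ) p).mem_iff.mp hC
  exact ⟨closure D, mem_of_superset hD subset_closure, hDconv.closure, isClosed_closure,
    subset_trans (hCcl.closure_subset_iff.mpr hDC) hCW⟩

/-- Mean value theorem in locally convex spaces: the difference quotient lies in any
closed convex set containing the values of the derivative. -/
theorem mvt_convex {E : Type*} [AddCommGroup E] [Module ℝ E] [TopologicalSpace E]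
    [IsTopologicalAddGroup E] [ContinuousSMul ℝ E] [LocallyConvexSpace ℝ E]
    {ψ d : ℝ → E} {t : ℝ} (ht : t ≠ 0)
    (hc : ContinuousOn ψ (uIcc 0 t))
    (hd : ∀ s ∈ uIcc 0 t,
      Tendsto (fun r : ℝ => r⁻¹ • (ψ (s + r) - ψ s)) (𝓝[≠] (0:ℝ)) (𝓝 (d s)))
    {S : Set E} (hSc : Convex ℝ S) (hScl : IsClosed S)
    (hdS : ∀ s ∈ uIcc 0 t, d s ∈ S) :
    t⁻¹ • (ψ t - ψ 0) ∈ S := by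
  by_contra hmem
  obtain ⟨l, u, hu1, hu2⟩ := geometric_hahn_banach_closed_point hSc hScl hmem
  set φ : ℝ → ℝ := fun s => l (ψ s) with hφ
  have hder : ∀ s ∈ uIcc 0 t, HasDerivAt φ (l (d s)) s := by
    intro s hs
    rw [hasDerivAt_iff_tendsto_slope_zero]
    have := (l.continuous.tendsto (d s)).comp (hd s hs)
    convert this using 2 with r
    simp [hφ, Function.comp, map_sub, map_smul]
  have hφc : ContinuousOn φ (uIcc 0 t) := l.continuous.comp_continuousOn hc
  have key : ∃ c ∈ uIcc 0 t, l (d c) = l (t⁻¹ • (ψ t - ψ 0)) := by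
    rcases ht.lt_or_gt with h | h
    · have huicc : uIcc 0 t = Icc t 0 := by rw [uIcc_comm, uIcc_of_le h.le]
      rw [huicc] at hφc hder ⊢
      obtain ⟨c, hc1, hc2⟩ := exists_hasDerivAt_eq_slope φ (fun s => l (d s)) h hφc
        (fun x hx => hder x (Ioo_subset_Icc_self hx))
      refine ⟨c, Ioo_subset_Icc_self hc1, ?_⟩
      rw [hc2, map_smul, smul_eq_mul, map_sub]
      rw [zero_sub, div_neg, ← neg_div, neg_sub, div_eq_inv_mul]
    · have huicc : uIcc 0 t = Icc 0 t := uIcc_of_le h.le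
      rw [huicc] at hφc hder ⊢
      obtain ⟨c, hc1, hc2⟩ := exists_hasDerivAt_eq_slope φ (fun s => l (d s)) h hφc
        (fun x hx => hder x (Ioo_subset_Icc_self hx))
      refine ⟨c, Ioo_subset_Icc_self hc1, ?_⟩
      rw [hc2, map_smul, smul_eq_mul, map_sub]
      field_simp
      simp only [hφ, sub_zero]; ring
  obtain ⟨c, hc1, hc2⟩ := key
  have := hu1 (d c) (hdS c hc1)
  rw [hc2] at this
  linarith

theorem abs_le_abs_of_mem_uIcc {s t : ℝ} (h : s ∈ uIcc 0 t) : |s| ≤ |t| := by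
  rcases Set.mem_uIcc.mp h with ⟨h1, h2⟩ | ⟨h1, h2⟩
  · rw [abs_of_nonneg h1]; exact h2.trans (le_abs_self t)
  · rw [abs_of_nonpos h2]; linarith [neg_abs_le t]

/-- Joint continuity of evaluation along a sequence. -/
theorem tendsto_eval_seq {Y E : Type*} [TopologicalSpace Y] [TopologicalSpace E]
    {g : ℕ → C(Y, E)} {v : ℕ → Y} {g₀ : C(Y, E)} {v₀ : Y}
    (hg : Tendsto g atTop (𝓝 g₀)) (hv : Tendsto v atTop (𝓝 v₀)) :
    Tendsto (fun n => g n (v n)) atTop (𝓝 (g₀ v₀)) := by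
  rw [tendsto_def]
  intro W hW
  obtain ⟨W', hW'sub, hW'open, hW'mem⟩ := mem_nhds_iff.mp hW
  have hO : (g₀ ⁻¹' W') ∈ 𝓝 v₀ := (hW'open.preimage g₀.continuous).mem_nhds hW'mem
  obtain ⟨m, hm⟩ := (eventually_atTop).mp (hv.eventually_mem hO)
  have hvm : Tendsto (fun k => v (k + m)) atTop (𝓝 v₀) :=
    hv.comp (tendsto_add_atTop_nat m)
  have hK : IsCompact (insert v₀ (Set.range fun k => v (k + m))) :=
    hvm.isCompact_insert_range
  have hmaps : MapsTo g₀ (insert v₀ (Set.range fun k => v (k + m))) W' := by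
    rintro y (rfl | ⟨k, rfl⟩)
    · exact hW'mem
    · exact hm (k + m) (Nat.le_add_left m k)
  have hev := ContinuousMap.tendsto_nhds_compactOpen.mp hg _ hK W' hW'open hmaps
  filter_upwards [hev, eventually_ge_atTop m] with n h1 h2
  refine hW'sub (h1 ?_)
  have : v n = v ((n - m) + m) := by rw [Nat.sub_add_cancel h2]
  rw [this]
  exact Or.inr ⟨n - m, rfl⟩

/-- Joint continuity of evaluation along countably generated filters. -/
theorem tendsto_eval_of_countably_generated {α Y E : Type*} [TopologicalSpace Y]
    [TopologicalSpace E] {l : Filter α} [l.IsCountablyGenerated]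
    {g : α → C(Y, E)} {v : α → Y} {g₀ : C(Y, E)} {v₀ : Y}
    (hg : Tendsto g l (𝓝 g₀)) (hv : Tendsto v l (𝓝 v₀)) :
    Tendsto (fun a => g a (v a)) l (𝓝 (g₀ v₀)) := by
  rw [tendsto_iff_seq_tendsto]
  intro u hu
  exact tendsto_eval_seq (hg.comp hu) (hv.comp hu)

/-- Slices of jointly continuous maps are continuous. -/
theorem continuous_slice {X Y E : Type*} [TopologicalSpace X] [TopologicalSpace Y]
    [TopologicalSpace E] {f : X → Y → E} {U : Set X} {V : Set Y}
    (hU : IsOpen U) (hV : IsOpen V)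
    (hf : ContinuousOn (fun p : X × Y => f p.1 p.2) (U ×ˢ V)) {x : X} (hx : x ∈ U) :
    Continuous fun v : ↥V => f x v.1 := by
  rw [continuous_iff_continuousAt]
  intro v
  have h1 : ContinuousAt (fun p : X × Y => f p.1 p.2) (x, v.1) :=
    hf.continuousAt ((hU.prod hV).mem_nhds ⟨hx, v.2⟩)
  have h2 : ContinuousAt (fun v : ↥V => ((x, v.1) : X × Y)) v :=
    (continuous_const.prodMk continuous_subtype_val).continuousAt
  exact ContinuousAt.comp (g := fun p : X × Y => f p.1 p.2) (f := fun v : ↥V => (x, v.1)) h1 h2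

/-- Slices of the partial differential are continuous. -/
theorem continuous_slice3 {X Y Z E : Type*} [TopologicalSpace X] [TopologicalSpace Y]
    [TopologicalSpace Z] [TopologicalSpace E] {f : X → Y → Z → E} {U : Set X} {V : Set Y}
    (hU : IsOpen U) (hV : IsOpen V)
    (hf : ContinuousOn (fun p : X × Y × Z => f p.1 p.2.1 p.2.2) (U ×ˢ V ×ˢ (univ : Set Z)))
    {x : X} (hx : x ∈ U) (z : Z) :
    Continuous fun v : ↥V => f x v.1 z := by
  rw [continuous_iff_continuousAt]
  intro v
  have h1 : ContinuousAt (fun p : X × Y × Z => f p.1 p.2.1 p.2.2) (x, v.1, z) :=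
    hf.continuousAt ((hU.prod (hV.prod isOpen_univ)).mem_nhds ⟨hx, v.2, trivial⟩)
  have h2 : ContinuousAt (fun v : ↥V => ((x, v.1, z) : X × Y × Z)) v :=
    (continuous_const.prodMk (continuous_subtype_val.prodMk continuous_const)).continuousAt
  exact ContinuousAt.comp (g := fun p : X × Y × Z => f p.1 p.2.1 p.2.2)
    (f := fun v : ↥V => (x, v.1, z)) h1 h2

open scoped Classical in
/-- Currying preserves continuity (the "easy" direction of the exponential law). -/
theorem continuousOn_dif_curry {X Y E : Type*} [TopologicalSpace X] [TopologicalSpace Y]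
    [TopologicalSpace E] [AddCommGroup E] [IsTopologicalAddGroup E]
    {f : X → Y → E} {U : Set X} {V : Set Y}
    (hf : ContinuousOn (fun p : X × Y => f p.1 p.2) (U ×ˢ V)) :
    ContinuousOn (fun x => if h : Continuous (fun v : ↥V => f x v.1) then
      (⟨fun v => f x v.1, h⟩ : C(↥V, E)) else 0) U := by
  rw [continuousOn_iff_continuous_restrict]
  have hmk : Continuous (fun q : ↥U × ↥V => f q.1.1 q.2.1) := by
    have hin : Continuous (fun q : ↥U × ↥V => ((q.1.1, q.2.1) : X × Y)) :=
      (continuous_subtype_val.comp continuous_fst).prodMk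
        (continuous_subtype_val.comp continuous_snd)
    exact hf.comp_continuous (f := fun q : ↥U × ↥V => ((q.1.1, q.2.1) : X × Y)) hin
      (fun q => ⟨q.1.2, q.2.2⟩)
  have hcur := (ContinuousMap.curry ⟨_, hmk⟩).continuous
  refine hcur.congr fun u => ?_
  have hcont : Continuous (fun v : ↥V => f u.1 v.1) :=
    ((ContinuousMap.curry ⟨_, hmk⟩) u).continuous
  simp only [Set.restrict_apply, dif_pos hcont]
  exact ContinuousMap.ext fun v => rfl

/-- The key analytic step: directional differentiability of the curried map, with uniform
convergence on compact sets obtained via the mean value theorem and local convexity. -/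
theorem hasDirDeriv_curry
    {G H E : Type*} [Group G] [TopologicalSpace G] [IsTopologicalGroup G]
    [TopologicalSpace H]
    [AddCommGroup E] [Module ℝ E] [TopologicalSpace E] [IsTopologicalAddGroup E]
    [ContinuousSMul ℝ E] [LocallyConvexSpace ℝ E]
    {U : Set G} {V : Set H} (hU : IsOpen U)
    {f : G → H → E}
    (hf : ContinuousOn (fun p : G × H => f p.1 p.2) (U ×ˢ V))
    {d10 : G → H → OneParam G → E}
    (hder : ∀ x ∈ U, ∀ y ∈ V, ∀ γ : OneParam G,
      HasDirDeriv (fun x' => f x' y) x γ (d10 x y γ))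
    (hd10 : ContinuousOn (fun p : G × H × OneParam G => d10 p.1 p.2.1 p.2.2)
      (U ×ˢ V ×ˢ (univ : Set (OneParam G))))
    {x : G} (hx : x ∈ U) (γ : OneParam G)
    {gG : G → C(↥V, E)} (hgG : ∀ x' ∈ U, ∀ v : ↥V, gG x' v = f x' v.1)
    {L : C(↥V, E)} (hL : ∀ v : ↥V, L v = d10 x v.1 γ) :
    HasDirDeriv gG x γ L := by
  unfold HasDirDeriv
  rw [ContinuousMap.tendsto_nhds_compactOpen]
  intro K hK W hW hmaps
  have hx1 : Tendsto (fun s : ℝ => x * γ.1 s) (𝓝 0) (𝓝 x) := by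
    have hγ : Tendsto (fun s : ℝ => γ.1 s) (𝓝 0) (𝓝 (1 : G)) := by
      have := γ.1.continuous.tendsto 0
      rwa [OneParam.map_zero' γ] at this
    have := (tendsto_const_nhds (x := x) (f := 𝓝 (0:ℝ))).mul hγ
    rwa [mul_one] at this
  have hU0 : ∀ᶠ s : ℝ in 𝓝 0, x * γ.1 s ∈ U := hx1.eventually_mem (hU.mem_nhds hx)
  obtain ⟨ε₀, hε₀pos, hε₀⟩ := Metric.eventually_nhds_iff_ball.mp hU0
  have hballU : ∀ s : ℝ, |s| < ε₀ → x * γ.1 s ∈ U := by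
    intro s hs
    exact hε₀ s (by simpa [Real.dist_eq] using hs)
  have key : ∀ v₀ : ↥V, v₀ ∈ K → ∃ ε > 0, ∃ O ∈ 𝓝 v₀, ∃ S : Set E,
      Convex ℝ S ∧ IsClosed S ∧ S ⊆ W ∧
      ∀ s : ℝ, |s| < ε → (x * γ.1 s ∈ U ∧
        ∀ v : ↥V, v ∈ O → d10 (x * γ.1 s) v.1 γ ∈ S) := by
    intro v₀ hv₀
    have hpW : W ∈ 𝓝 (L v₀) := hW.mem_nhds (hmaps hv₀)
    obtain ⟨S, hSmem, hSconv, hScl, hSW⟩ := exists_closed_convex_nhds hpW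
    have hSmem' : S ∈ 𝓝 (d10 x v₀.1 γ) := by rwa [hL v₀] at hSmem
    have hcw : ContinuousWithinAt (fun p : G × H × OneParam G => d10 p.1 p.2.1 p.2.2)
        (U ×ˢ V ×ˢ (univ : Set (OneParam G))) (x, v₀.1, γ) :=
      hd10 _ ⟨hx, v₀.2, trivial⟩
    have hUev : ∀ᶠ q : ℝ × ↥V in 𝓝 (0, v₀), x * γ.1 q.1 ∈ U :=
      (continuous_fst.tendsto ((0 : ℝ), v₀)).eventually hU0
    have hm : Tendsto (fun q : ℝ × ↥V => ((x * γ.1 q.1, q.2.1, γ) : G × H × OneParam G))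
        (𝓝 (0, v₀)) (𝓝[U ×ˢ V ×ˢ (univ : Set (OneParam G))] (x, v₀.1, γ)) := by
      rw [tendsto_nhdsWithin_iff]
      constructor
      · have h1 : Tendsto (fun q : ℝ × ↥V => x * γ.1 q.1) (𝓝 (0, v₀)) (𝓝 x) :=
          hx1.comp (continuous_fst.tendsto ((0 : ℝ), v₀))
        have h2 : Tendsto (fun q : ℝ × ↥V => (q.2.1 : H)) (𝓝 (0, v₀)) (𝓝 v₀.1) :=
          (continuous_subtype_val.comp continuous_snd).tendsto ((0 : ℝ), v₀)
        exact h1.prodMk_nhds (h2.prodMk_nhds tendsto_const_nhds)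
      · filter_upwards [hUev] with q hq
        exact ⟨hq, q.2.2, trivial⟩
    have htend := hcw.tendsto.comp hm
    have hev : ∀ᶠ q : ℝ × ↥V in 𝓝 (0, v₀), d10 (x * γ.1 q.1) q.2.1 γ ∈ S :=
      htend.eventually_mem hSmem'
    rw [nhds_prod_eq, eventually_prod_iff] at hev
    obtain ⟨pa, hpa, pb, hpb, hcomb⟩ := hev
    obtain ⟨ε₁, hε₁pos, hball⟩ := Metric.eventually_nhds_iff_ball.mp hpa
    refine ⟨min ε₀ ε₁, lt_min hε₀pos hε₁pos, {v | pb v}, hpb, S, hSconv, hScl, hSW, ?_⟩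
    intro s hs
    refine ⟨hballU s (hs.trans_le (min_le_left _ _)), fun v hv => ?_⟩
    exact hcomb (hball s (by simpa [Real.dist_eq] using hs.trans_le (min_le_right _ _))) hv
  choose! ε hεpos O hO S hSconv hScl hSW hP using key
  obtain ⟨tF, htFK, htFcov⟩ := hK.elim_nhds_subcover O (fun v hv => hO v hv)
  rcases Finset.eq_empty_or_nonempty tF with rfl | hne
  · refine Eventually.of_forall fun t v hv => ?_
    have := htFcov hv
    simp at this
  · set εm := tF.inf' hne ε with hεm
    have hεmpos : 0 < εm := by
      rw [hεm, Finset.lt_inf'_iff]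
      exact fun i hi => hεpos i (htFK i hi)
    have hevsm : ∀ᶠ t : ℝ in 𝓝 (0:ℝ), |t| < εm := by
      filter_upwards [Metric.ball_mem_nhds (0 : ℝ) hεmpos] with t ht
      simpa [Real.dist_eq] using ht
    filter_upwards [eventually_nhdsWithin_of_eventually_nhds hevsm,
      self_mem_nhdsWithin] with t hlt (hne0 : t ≠ 0)
    intro v hvK
    obtain ⟨i, hi, hviO⟩ : ∃ i ∈ tF, v ∈ O i := by
      have := htFcov hvK
      simpa using this
    have hiK : i ∈ K := htFK i hi
    have hlt' : |t| < ε i := lt_of_lt_of_le hlt (Finset.inf'_le ε hi)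
    have habs : ∀ s ∈ uIcc 0 t, |s| < ε i :=
      fun s hs => lt_of_le_of_lt (abs_le_abs_of_mem_uIcc hs) hlt'
    have hcψ : ContinuousOn (fun s : ℝ => f (x * γ.1 s) v.1) (uIcc 0 t) := by
      have hin : Continuous (fun s : ℝ => ((x * γ.1 s, v.1) : G × H)) :=
        (continuous_const.mul γ.1.continuous).prodMk continuous_const
      refine ContinuousOn.comp (g := fun p : G × H => f p.1 p.2) hf hin.continuousOn ?_
      intro s hs
      exact ⟨(hP i hiK s (habs s hs)).1, v.2⟩
    have hdψ : ∀ s ∈ uIcc 0 t,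
        Tendsto (fun r : ℝ => r⁻¹ • (f (x * γ.1 (s + r)) v.1 - f (x * γ.1 s) v.1))
          (𝓝[≠] (0:ℝ)) (𝓝 (d10 (x * γ.1 s) v.1 γ)) := by
      intro s hs
      have hsU := (hP i hiK s (habs s hs)).1
      have hh := hder _ hsU v.1 v.2 γ
      unfold HasDirDeriv at hh
      have harg : ∀ r : ℝ, x * γ.1 (s + r) = (x * γ.1 s) * γ.1 r := fun r => by
        rw [γ.2 s r, mul_assoc]
      simpa only [harg] using hh
    have hS : t⁻¹ • (f (x * γ.1 t) v.1 - f (x * γ.1 0) v.1) ∈ S i := by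
      refine mvt_convex hne0 hcψ hdψ (hSconv i hiK) (hScl i hiK) ?_
      intro s hs
      exact (hP i hiK s (habs s hs)).2 v hviO
    have h1 : gG (x * γ.1 t) v = f (x * γ.1 t) v.1 :=
      hgG _ (hP i hiK t hlt').1 v
    have h2 : gG x v = f x v.1 := hgG x hx v
    show (t⁻¹ • (gG (x * γ.1 t) - gG x)) v ∈ W
    rw [ContinuousMap.smul_apply, ContinuousMap.sub_apply, h1, h2]
    refine hSW i hiK ?_
    have h0 : f x v.1 = f (x * γ.1 0) v.1 := by rw [OneParam.map_zero', mul_one]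
    rw [h0]
    exact hS

open scoped Classical in
/-- The "hard" direction of the exponential law: uncurrying a `C¹`-map gives a
`C^{1,0}`-map, using metrizability (via sequences) for the joint continuity. -/
theorem isC10_of_isC1
    {G H E : Type*} [Group G] [TopologicalSpace G] [IsTopologicalGroup G]
    [Group H] [TopologicalSpace H] [IsTopologicalGroup H]
    [TopologicalSpace.MetrizableSpace G] [TopologicalSpace.MetrizableSpace H]
    [AddCommGroup E] [Module ℝ E] [TopologicalSpace E] [IsTopologicalAddGroup E]
    [ContinuousSMul ℝ E]
    {U : Set G} {V : Set H}
    {g : G → C(↥V, E)} (hg : IsC1 g U) :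
    IsC10 (fun x y => if h : y ∈ V then g x ⟨y, h⟩ else 0) U V := by
  obtain ⟨hgc, dg, hdg, hdgc⟩ := hg
  constructor
  · -- joint continuity
    rintro ⟨x₀, y₀⟩ ⟨hx₀, hy₀⟩
    have hl : 𝓝[U ×ˢ V] (x₀, y₀) = 𝓝[U] x₀ ×ˢ 𝓝[V] y₀ := nhdsWithin_prod_eq x₀ y₀ U V
    have hfst : Tendsto (Prod.fst : G × H → G) (𝓝[U ×ˢ V] (x₀, y₀)) (𝓝[U] x₀) := by
      rw [hl]; exact tendsto_fst
    have hsnd : Tendsto (Prod.snd : G × H → H) (𝓝[U ×ˢ V] (x₀, y₀)) (𝓝 y₀) := by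
      rw [hl]; exact tendsto_snd.mono_right nhdsWithin_le_nhds
    have hgt : Tendsto (fun q : G × H => g q.1) (𝓝[U ×ˢ V] (x₀, y₀)) (𝓝 (g x₀)) :=
      ((hgc x₀ hx₀).tendsto).comp hfst
    set vmap : G × H → ↥V := fun q => if h : q.2 ∈ V then ⟨q.2, h⟩ else ⟨y₀, hy₀⟩ with hvmap
    have hvt : Tendsto vmap (𝓝[U ×ˢ V] (x₀, y₀)) (𝓝 (⟨y₀, hy₀⟩ : ↥V)) := by
      rw [IsEmbedding.subtypeVal.tendsto_nhds_iff]
      have heq : (fun q : G × H => (vmap q : H)) =ᶠ[𝓝[U ×ˢ V] (x₀, y₀)] Prod.snd := by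
        filter_upwards [self_mem_nhdsWithin] with q hq
        simp [hvmap, dif_pos hq.2]
      exact Tendsto.congr' heq.symm hsnd
    have heval := tendsto_eval_of_countably_generated hgt hvt
    have hkey : (fun q : G × H => if h : q.2 ∈ V then g q.1 ⟨q.2, h⟩ else 0)
        =ᶠ[𝓝[U ×ˢ V] (x₀, y₀)] (fun q => g q.1 (vmap q)) := by
      filter_upwards [self_mem_nhdsWithin] with q hq
      simp [hvmap, dif_pos hq.2]
    have : Tendsto (fun q : G × H => if h : q.2 ∈ V then g q.1 ⟨q.2, h⟩ else 0)
        (𝓝[U ×ˢ V] (x₀, y₀)) (𝓝 (g x₀ ⟨y₀, hy₀⟩)) := Tendsto.congr' hkey.symm heval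
    simpa [ContinuousWithinAt, dif_pos hy₀] using this
  · refine ⟨fun x y γ => if h : y ∈ V then dg x γ ⟨y, h⟩ else 0, ?_, ?_⟩
    · -- pointwise directional derivatives
      intro x hx y hy γ
      have hev := (continuous_eval_const (F := C(↥V, E)) (⟨y, hy⟩ : ↥V)).tendsto
        (dg x γ) |>.comp (hdg x hx γ)
      unfold HasDirDeriv
      simp only [dif_pos hy]
      convert hev using 2 with t
      simp [Function.comp_apply]
    · -- continuity of the partial differential
      rintro ⟨x₀, y₀, γ₀⟩ ⟨hx₀, hy₀, -⟩
      set l := 𝓝[U ×ˢ V ×ˢ (univ : Set (OneParam G))] (x₀, y₀, γ₀) with hldef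
      haveI hcg : l.IsCountablyGenerated := by
        rw [hldef]; infer_instance
      have hproj : Tendsto (fun q : G × H × OneParam G => (q.1, q.2.2))
          l (𝓝[U ×ˢ (univ : Set (OneParam G))] (x₀, γ₀)) := by
        rw [tendsto_nhdsWithin_iff]
        constructor
        · exact ((continuous_fst.prodMk (continuous_snd.comp continuous_snd)).tendsto
            _).mono_left nhdsWithin_le_nhds
        · filter_upwards [self_mem_nhdsWithin] with q hq
          exact ⟨hq.1, trivial⟩
      have hgt : Tendsto (fun q : G × H × OneParam G => dg q.1 q.2.2) l (𝓝 (dg x₀ γ₀)) :=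
        (hdgc (x₀, γ₀) ⟨hx₀, trivial⟩).tendsto.comp hproj
      set vmap : G × H × OneParam G → ↥V :=
        fun q => if h : q.2.1 ∈ V then ⟨q.2.1, h⟩ else ⟨y₀, hy₀⟩ with hvmap
      have hsnd : Tendsto (fun q : G × H × OneParam G => q.2.1) l (𝓝 y₀) :=
        ((continuous_fst.comp continuous_snd).tendsto _).mono_left nhdsWithin_le_nhds
      have hvt : Tendsto vmap l (𝓝 (⟨y₀, hy₀⟩ : ↥V)) := by
        rw [IsEmbedding.subtypeVal.tendsto_nhds_iff]
        have heq : (fun q : G × H × OneParam G => (vmap q : H)) =ᶠ[l]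
            (fun q => q.2.1) := by
          filter_upwards [self_mem_nhdsWithin] with q hq
          simp [hvmap, dif_pos hq.2.1]
        exact Tendsto.congr' heq.symm hsnd
      have heval := tendsto_eval_of_countably_generated hgt hvt
      have hkey : (fun q : G × H × OneParam G =>
            if h : q.2.1 ∈ V then dg q.1 q.2.2 ⟨q.2.1, h⟩ else 0) =ᶠ[l]
          (fun q => dg q.1 q.2.2 (vmap q)) := by
        filter_upwards [self_mem_nhdsWithin] with q hq
        simp [hvmap, dif_pos hq.2.1]
      have : Tendsto (fun q : G × H × OneParam G =>
            if h : q.2.1 ∈ V then dg q.1 q.2.2 ⟨q.2.1, h⟩ else 0) l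
          (𝓝 (dg x₀ γ₀ ⟨y₀, hy₀⟩)) := Tendsto.congr' hkey.symm heval
      simpa [ContinuousWithinAt, dif_pos hy₀] using this

set_option maxHeartbeats 1000000 in
/-- If `G` and `H` are metrizable topological groups, then `f ↦ f^∨` is a
bijection from the set of `C^{1,0}`-maps `U × V → E` onto the set of `C¹`-maps
`U → C(V,E)`; in particular, for every `C¹`-map `g : U → C(V,E)` the map
`g^∧ : U × V → E`, `(x,y) ↦ g(x)(y)`, is `C^{1,0}`. -/
theorem exp_law_C10_of_metrizable
    {G H E : Type*} [Group G] [TopologicalSpace G] [IsTopologicalGroup G]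
    [Group H] [TopologicalSpace H] [IsTopologicalGroup H]
    [TopologicalSpace.MetrizableSpace G] [TopologicalSpace.MetrizableSpace H]
    [AddCommGroup E] [Module ℝ E] [TopologicalSpace E] [IsTopologicalAddGroup E]
    [ContinuousSMul ℝ E] [LocallyConvexSpace ℝ E] [T2Space E]
    (U : Set G) (V : Set H) (hU : IsOpen U) (hV : IsOpen V) :
    Set.BijOn (Phi (E := E) (U := U) (V := V))
      {F : ↥U × ↥V → E | ∃ f : G → H → E,
        IsC10 f U V ∧ ∀ p : ↥U × ↥V, F p = f p.1.1 p.2.1}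
      {Γ : ↥U → C(↥V, E) | ∃ g : G → C(↥V, E),
        IsC1 g U ∧ ∀ u : ↥U, Γ u = g u.1} ∧
    (∀ g : G → C(↥V, E), IsC1 g U →
      ∃ f : G → H → E, IsC10 f U V ∧ ∀ x ∈ U, ∀ v : ↥V, f x v.1 = g x v) := by
  classical
  constructor
  · refine ⟨?_, ?_, ?_⟩
    · -- MapsTo
      rintro F ⟨f, ⟨hfc, d10, hder, hd10c⟩, hF⟩
      set gG : G → C(↥V, E) := fun x =>
        if h : Continuous (fun v : ↥V => f x v.1) then ⟨fun v => f x v.1, h⟩ else 0 with hgGdef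
      set dgG : G → OneParam G → C(↥V, E) := fun x γ =>
        if h : Continuous (fun v : ↥V => d10 x v.1 γ) then ⟨fun v => d10 x v.1 γ, h⟩ else 0
        with hdgGdef
      have hgGval : ∀ x' ∈ U, ∀ v : ↥V, gG x' v = f x' v.1 := by
        intro x' hx' v
        have hc := continuous_slice hU hV hfc hx'
        simp only [hgGdef, dif_pos hc]
        rfl
      have hdgGval : ∀ x ∈ U, ∀ γ : OneParam G, ∀ v : ↥V, dgG x γ v = d10 x v.1 γ := by
        intro x hx γ v
        have hc := continuous_slice3 hU hV hd10c hx γ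
        simp only [hdgGdef, dif_pos hc]
        rfl
      refine ⟨gG, ⟨?_, dgG, ?_, ?_⟩, ?_⟩
      · exact continuousOn_dif_curry hfc
      · intro x hx γ
        exact hasDirDeriv_curry hU hfc hder hd10c hx γ hgGval (hdgGval x hx γ)
      · -- continuity of (x, γ) ↦ dgG x γ
        have hd10' : ContinuousOn
            (fun q : (G × OneParam G) × H => d10 q.1.1 q.2 q.1.2)
            ((U ×ˢ (univ : Set (OneParam G))) ×ˢ V) := by
          have hin : Continuous (fun q : (G × OneParam G) × H =>
              ((q.1.1, q.2, q.1.2) : G × H × OneParam G)) :=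
            (continuous_fst.comp continuous_fst).prodMk
              (continuous_snd.prodMk (continuous_snd.comp continuous_fst))
          refine ContinuousOn.comp (g := fun p : G × H × OneParam G => d10 p.1 p.2.1 p.2.2)
            hd10c hin.continuousOn ?_
          intro q hq
          exact ⟨hq.1.1, hq.2, trivial⟩
        exact continuousOn_dif_curry (f := fun (p : G × OneParam G) (y : H) => d10 p.1 y p.2)
          (U := U ×ˢ (univ : Set (OneParam G))) hd10'
      · -- Phi F = gG on U
        intro u
        have hFu : (fun v : ↥V => F (u, v)) = fun v => f u.1 v.1 := funext fun v => hF (u, v)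
        have hc : Continuous (fun v : ↥V => f u.1 v.1) := continuous_slice hU hV hfc u.2
        have hc' : Continuous (fun v : ↥V => F (u, v)) := by rw [hFu]; exact hc
        have h1 : Phi (E := E) (U := U) (V := V) F u = ⟨fun v => F (u, v), hc'⟩ := dif_pos hc'
        have h2 : gG u.1 = ⟨fun v => f u.1 v.1, hc⟩ := dif_pos hc
        rw [h1, h2]
        exact ContinuousMap.ext fun v => hF (u, v)
    · -- InjOn
      rintro F1 ⟨f1, ⟨hf1c, -⟩, hF1⟩ F2 ⟨f2, ⟨hf2c, -⟩, hF2⟩ heq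
      funext p
      have hc1 : Continuous (fun v : ↥V => F1 (p.1, v)) := by
        have : (fun v : ↥V => F1 (p.1, v)) = fun v => f1 p.1.1 v.1 :=
          funext fun v => hF1 (p.1, v)
        rw [this]; exact continuous_slice hU hV hf1c p.1.2
      have hc2 : Continuous (fun v : ↥V => F2 (p.1, v)) := by
        have : (fun v : ↥V => F2 (p.1, v)) = fun v => f2 p.1.1 v.1 :=
          funext fun v => hF2 (p.1, v)
        rw [this]; exact continuous_slice hU hV hf2c p.1.2
      have h1 : Phi (E := E) (U := U) (V := V) F1 p.1 = ⟨fun v => F1 (p.1, v), hc1⟩ :=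
        dif_pos hc1
      have h2 : Phi (E := E) (U := U) (V := V) F2 p.1 = ⟨fun v => F2 (p.1, v), hc2⟩ :=
        dif_pos hc2
      have := congrFun heq p.1
      rw [h1, h2] at this
      have hval := congrFun (congrArg DFunLike.coe this) p.2
      simpa using hval
    · -- SurjOn
      rintro Γ ⟨g, hg, hΓ⟩
      set f : G → H → E := fun x y => if h : y ∈ V then g x ⟨y, h⟩ else 0 with hfdef
      have hf10 : IsC10 f U V := isC10_of_isC1 hg
      refine ⟨fun p => f p.1.1 p.2.1, ⟨f, hf10, fun p => rfl⟩, ?_⟩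
      funext u
      have hceq : (fun v : ↥V => f u.1 v.1) = fun v => g u.1 v := by
        funext v
        simp [hfdef, dif_pos v.2]
      have hc : Continuous (fun v : ↥V => f u.1 v.1) := by
        rw [hceq]; exact (g u.1).continuous
      have h1 : Phi (E := E) (U := U) (V := V) (fun p => f p.1.1 p.2.1) u
          = ⟨fun v => f u.1 v.1, hc⟩ := dif_pos hc
      rw [h1, hΓ u]
      refine ContinuousMap.ext fun v => ?_
      simp [hfdef, dif_pos v.2]
  · -- the "in particular" statement
    intro g hg
    refine ⟨fun x y => if h : y ∈ V then g x ⟨y, h⟩ else 0, isC10_of_isC1 hg, ?_⟩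
    intro x hx v
    simp [dif_pos v.2]
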